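/- Let L(τ) = N[(1−τ)(mL_g+αF) + (mg+F)mN]/(α+(Nm−α)τ) with Nm > α, g ≥ 0, F > 0, L_g ≥ 0. Then for τ ∈ (0,1), dL/dτ = −N²m²(L_g + (Nm−α)g + NF)/(α+(Nm−α)τ)² < 0: a tax increase decreases private employment. -/

import Mathlib

/-- A tax increase decreases private employment. -/
theorem stmt_10 (α N m F g Lg : ℝ) (hα : 0 < α) (hN : 0 < N) (hm : 0 < m)
    (hF : 0 < F) (hg : 0 ≤ g) (hLg : 0 ≤ Lg) (hNm : N * m > α)
    (τ : ℝ) (hτ0 : 0 < τ) (hτ1 : τ < 1) :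
    deriv (fun τ : ℝ =>
        N * ((1 - τ) * (m * Lg + α * F) + (m * g + F) * m * N) / (α + (N * m - α) * τ)) τ
      = -(N ^ 2 * m ^ 2 * (Lg + (N * m - α) * g + N * F)) / (α + (N * m - α) * τ) ^ 2 ∧
    deriv (fun τ : ℝ =>
        N * ((1 - τ) * (m * Lg + α * F) + (m * g + F) * m * N) / (α + (N * m - α) * τ)) τ < 0 := by
  have hD : 0 < α + (N * m - α) * τ := by nlinarith
  have hu : HasDerivAt (fun τ : ℝ =>
      N * ((1 - τ) * (m * Lg + α * F) + (m * g + F) * m * N))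
      (-(N * (m * Lg + α * F))) τ := by
    have : HasDerivAt (fun τ : ℝ =>
        N * ((1 - τ) * (m * Lg + α * F) + (m * g + F) * m * N))
        (N * ((0 - 1) * (m * Lg + α * F) + 0)) τ := by
      apply HasDerivAt.const_mul
      exact (((hasDerivAt_const τ (1:ℝ)).sub (hasDerivAt_id τ)).mul_const _).add
        (hasDerivAt_const τ _)
    convert this using 1; ring
  have hv : HasDerivAt (fun τ : ℝ => α + (N * m - α) * τ) (N * m - α) τ := by
    exact ((hasDerivAt_const τ α).add ((hasDerivAt_id τ).const_mul (N * m - α))).congr_deriv (by ring)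
  have hder := (hu.div hv hD.ne')
  have heq : deriv (fun τ : ℝ =>
        N * ((1 - τ) * (m * Lg + α * F) + (m * g + F) * m * N) / (α + (N * m - α) * τ)) τ
      = -(N ^ 2 * m ^ 2 * (Lg + (N * m - α) * g + N * F)) / (α + (N * m - α) * τ) ^ 2 := by
    rw [show deriv (fun τ : ℝ => N * ((1 - τ) * (m * Lg + α * F) + (m * g + F) * m * N) / (α + (N * m - α) * τ)) τ = _ from hder.deriv]
    field_simp
    ring
  refine ⟨heq, ?_⟩
  rw [heq]
  apply div_neg_of_neg_of_pos
  · have h1 : 0 < N * m - α := by linarith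
    have h2 : 0 < Lg + (N * m - α) * g + N * F := by
      have := mul_nonneg h1.le hg
      nlinarith [mul_pos hN hF]
    have h3 : 0 < N ^ 2 * m ^ 2 := by positivity
    nlinarith [mul_pos h3 h2]
  · positivity
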